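/- Let f ∈ C¹(ℝ) with f' ∈ L^p(ℝ), 1 < p < ∞, and γ > 0. Then sup_{λ>0} λ^p ∬_{E_{λ,γ/p}} t^{γ−1} dt dx ≤ (C_p^p/γ) ‖f'‖_{L^p(ℝ)}^p, where E_{λ,γ/p} = {(x,t) ∈ ℝ × (0,∞) : |f(x+t) − f(x)| > λ t^{γ/p + 1}} and C_p is the L^p operator norm of the one-sided Hardy–Littlewood maximal operator M g(x) = sup_{t>0} (1/t) ∫_x^{x+t} |g(y)| dy. -/

import Mathlib

open MeasureTheory Filter Set
open scoped ENNReal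

noncomputable section

/-- The measure on `(0,∞)` with density `t^(γ-1)`. -/
def wGamma (γ : ℝ) : Measure ℝ :=
  (volume.restrict (Set.Ioi (0 : ℝ))).withDensity fun t => ENNReal.ofReal (t ^ (γ - 1))

/-- The one-sided Hardy–Littlewood maximal operator
`M g (x) = sup_{t>0} (1/t) ∫_x^{x+t} |g(y)| dy` (with values in `ℝ≥0∞`). -/
def oneSidedMaximal (g : ℝ → ℝ) (x : ℝ) : ℝ≥0∞ :=
  ⨆ (t : ℝ) (_ : 0 < t),
    (ENNReal.ofReal t)⁻¹ * ∫⁻ y in Set.Ioc x (x + t), ENNReal.ofReal |g y|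

lemma wGamma_Ioo (γ : ℝ) (hγ : 0 < γ) (T : ℝ) (hT : 0 ≤ T) :
    wGamma γ (Set.Ioo 0 T) = ENNReal.ofReal (T ^ γ / γ) := by
  have hint : IntegrableOn (fun t : ℝ => t ^ (γ - 1)) (Set.Ioo 0 T) := by
    have h := intervalIntegral.intervalIntegrable_rpow' (a := 0) (b := T)
      (r := γ - 1) (by linarith)
    rw [intervalIntegrable_iff_integrableOn_Ioo_of_le hT] at h
    exact h
  rw [wGamma, withDensity_apply _ measurableSet_Ioo,
    Measure.restrict_restrict measurableSet_Ioo,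
    Set.Ioo_inter_Ioi, max_self,
    ← ofReal_integral_eq_lintegral_ofReal hint
      (Filter.eventually_of_mem (self_mem_ae_restrict measurableSet_Ioo)
        (fun t ht => Real.rpow_nonneg ht.1.le _)),
    ← MeasureTheory.integral_Ioc_eq_integral_Ioo,
    ← intervalIntegral.integral_of_le hT,
    integral_rpow (Or.inl (by linarith))]
  rw [sub_add_cancel, Real.zero_rpow (by linarith), sub_zero]

instance (γ : ℝ) : SFinite (wGamma γ) := by
  unfold wGamma; infer_instance

lemma ftc_bound (f : ℝ → ℝ) (hf : ContDiff ℝ 1 f) (x t : ℝ) (ht : 0 < t) :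
    ENNReal.ofReal |f (x + t) - f x| ≤ ENNReal.ofReal t * oneSidedMaximal (deriv f) x := by
  have hcont : Continuous (deriv f) := hf.continuous_deriv le_rfl
  have hxt : x ≤ x + t := by linarith
  have hftc : f (x + t) - f x = ∫ y in x..(x + t), deriv f y :=
    (intervalIntegral.integral_deriv_eq_sub
      (fun y _ => (hf.differentiable one_ne_zero).differentiableAt)
      (hcont.intervalIntegrable _ _)).symm
  have habs : |f (x + t) - f x| ≤ ∫ y in Set.Ioc x (x + t), |deriv f y| := by
    rw [hftc, ← intervalIntegral.integral_of_le hxt]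
    exact intervalIntegral.abs_integral_le_integral_abs hxt
  calc ENNReal.ofReal |f (x + t) - f x|
      ≤ ENNReal.ofReal (∫ y in Set.Ioc x (x + t), |deriv f y|) :=
        ENNReal.ofReal_le_ofReal habs
    _ = ∫⁻ y in Set.Ioc x (x + t), ENNReal.ofReal |deriv f y| := by
        rw [ofReal_integral_eq_lintegral_ofReal
          (hcont.abs.integrableOn_Ioc)
          (Filter.Eventually.of_forall fun y => abs_nonneg _)]
    _ = ENNReal.ofReal t * ((ENNReal.ofReal t)⁻¹ *
          ∫⁻ y in Set.Ioc x (x + t), ENNReal.ofReal |deriv f y|) := by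
        rw [← mul_assoc, ENNReal.mul_inv_cancel
          (by simpa using ht) ENNReal.ofReal_ne_top, one_mul]
    _ ≤ ENNReal.ofReal t * oneSidedMaximal (deriv f) x := by
        gcongr
        exact le_iSup₂ (f := fun (s : ℝ) (_ : 0 < s) =>
          (ENNReal.ofReal s)⁻¹ * ∫⁻ y in Set.Ioc x (x + s), ENNReal.ofReal |deriv f y|) t ht

/-- Weighted Brezis–Van Schaftingen–Yung upper bound for first-order Sobolev seminorms:
`sup_{λ>0} λ^p ∬_{E_{λ,γ/p}} t^{γ−1} dt dx ≤ (C_p^p/γ) ‖f'‖_p^p`, where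
`E_{λ,γ/p} = {(x,t) : |f(x+t)−f(x)| > λ t^{γ/p+1}}` and `C_p` is an `L^p` bound for
the one-sided Hardy–Littlewood maximal operator. -/
theorem weighted_bsy_upper_bound_one_dim
    (p γ : ℝ) (hp : 1 < p) (hγ : 0 < γ)
    (f : ℝ → ℝ) (hf : ContDiff ℝ 1 f)
    (hf' : MemLp (deriv f) (ENNReal.ofReal p) volume)
    (Cp : ℝ) (hCp : 0 ≤ Cp)
    (hmaximal : ∀ g : ℝ → ℝ, Measurable g →
      ∫⁻ x, (oneSidedMaximal g x) ^ p
        ≤ ENNReal.ofReal (Cp ^ p) * ∫⁻ x, ENNReal.ofReal (|g x| ^ p)) :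
    (⨆ (l : ℝ) (_ : 0 < l), ENNReal.ofReal (l ^ p) *
        (volume.prod (wGamma γ))
          {q : ℝ × ℝ | 0 < q.2 ∧ l * q.2 ^ (γ / p + 1) < |f (q.1 + q.2) - f q.1|})
      ≤ ENNReal.ofReal (Cp ^ p / γ) * ∫⁻ x, ENNReal.ofReal (|deriv f x| ^ p) := by
  have hp0 : 0 < p := lt_trans one_pos hp
  have hfc : Continuous f := hf.continuous
  have hderivmeas : Measurable (deriv f) := (hf.continuous_deriv le_rfl).measurable
  set M : ℝ → ℝ≥0∞ := oneSidedMaximal (deriv f) with hM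
  refine iSup_le fun l => iSup_le fun hl => ?_
  set E : Set (ℝ × ℝ) :=
    {q : ℝ × ℝ | 0 < q.2 ∧ l * q.2 ^ (γ / p + 1) < |f (q.1 + q.2) - f q.1|} with hE
  have hEmeas : MeasurableSet E := by
    have h1 : MeasurableSet {q : ℝ × ℝ | 0 < q.2} :=
      measurable_snd measurableSet_Ioi
    have h2 : MeasurableSet {q : ℝ × ℝ | l * q.2 ^ (γ / p + 1) < |f (q.1 + q.2) - f q.1|} := by
      apply measurableSet_lt
      · exact measurable_const.mul
          ((Real.continuous_rpow_const (by positivity)).comp continuous_snd).measurable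
      · exact ((hfc.comp (continuous_fst.add continuous_snd)).sub
          (hfc.comp continuous_fst)).abs.measurable
    exact h1.inter h2
  have hprod : (volume.prod (wGamma γ)) E
      = ∫⁻ x, wGamma γ {t : ℝ | 0 < t ∧ l * t ^ (γ / p + 1) < |f (x + t) - f x|} := by
    rw [Measure.prod_apply hEmeas]
    rfl
  -- pointwise bound
  have hpoint : ∀ x : ℝ, ENNReal.ofReal (l ^ p) *
      wGamma γ {t : ℝ | 0 < t ∧ l * t ^ (γ / p + 1) < |f (x + t) - f x|}
      ≤ ENNReal.ofReal γ⁻¹ * (M x) ^ p := by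
    intro x
    rcases eq_or_ne (M x) ∞ with hMx | hMx
    · rw [hMx, ENNReal.top_rpow_of_pos hp0, ENNReal.mul_top]
      · exact le_top
      · simp [ENNReal.ofReal_eq_zero, not_le, inv_pos, hγ]
    · set m : ℝ := (M x).toReal with hm
      have hm0 : 0 ≤ m := ENNReal.toReal_nonneg
      set T : ℝ := (m / l) ^ (p / γ) with hT
      have hT0 : 0 ≤ T := Real.rpow_nonneg (div_nonneg hm0 hl.le) _
      have hsub : {t : ℝ | 0 < t ∧ l * t ^ (γ / p + 1) < |f (x + t) - f x|} ⊆ Set.Ioo 0 T := by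
        rintro t ⟨ht, hlt⟩
        refine ⟨ht, ?_⟩
        have htp : 0 < t ^ (γ / p) := Real.rpow_pos_of_pos ht _
        have hpos : 0 < l * t ^ (γ / p + 1) :=
          mul_pos hl (Real.rpow_pos_of_pos ht _)
        have h1 : ENNReal.ofReal (l * t ^ (γ / p + 1)) < ENNReal.ofReal t * M x :=
          lt_of_lt_of_le
            ((ENNReal.ofReal_lt_ofReal_iff (lt_trans hpos hlt)).2 hlt)
            (ftc_bound f hf x t ht)
        have hsplit : l * t ^ (γ / p + 1) = t * (l * t ^ (γ / p)) := by
          rw [Real.rpow_add ht, Real.rpow_one]; ring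
        rw [hsplit, ENNReal.ofReal_mul ht.le] at h1
        have h2 : ENNReal.ofReal (l * t ^ (γ / p)) < M x :=
          lt_of_mul_lt_mul_left' h1
        have h3 : l * t ^ (γ / p) < m := by
          by_contra hcon
          push_neg at hcon
          have := ENNReal.ofReal_le_ofReal hcon
          rw [hm, ENNReal.ofReal_toReal hMx] at this
          exact absurd h2 (not_lt.2 this)
        have h4 : t ^ (γ / p) < m / l := (lt_div_iff₀' hl).2 h3
        have h5 : t = (t ^ (γ / p)) ^ (p / γ) := by
          rw [← Real.rpow_mul ht.le,
            show γ / p * (p / γ) = 1 by field_simp, Real.rpow_one]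
        calc t = (t ^ (γ / p)) ^ (p / γ) := h5
          _ < (m / l) ^ (p / γ) :=
            Real.rpow_lt_rpow (Real.rpow_nonneg ht.le _) h4 (by positivity)
      have hTγ : T ^ γ = m ^ p / l ^ p := by
        rw [hT, ← Real.rpow_mul (div_nonneg hm0 hl.le),
          show p / γ * γ = p by field_simp, Real.div_rpow hm0 hl.le]
      calc ENNReal.ofReal (l ^ p) *
            wGamma γ {t : ℝ | 0 < t ∧ l * t ^ (γ / p + 1) < |f (x + t) - f x|}
          ≤ ENNReal.ofReal (l ^ p) * wGamma γ (Set.Ioo 0 T) := by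
            exact mul_le_mul_right (measure_mono hsub) _
        _ = ENNReal.ofReal (l ^ p) * ENNReal.ofReal (T ^ γ / γ) := by
            rw [wGamma_Ioo γ hγ T hT0]
        _ = ENNReal.ofReal (l ^ p * (T ^ γ / γ)) := by
            rw [ENNReal.ofReal_mul (Real.rpow_nonneg hl.le _)]
        _ = ENNReal.ofReal (γ⁻¹ * m ^ p) := by
            congr 1
            have hlp : (0:ℝ) < l ^ p := Real.rpow_pos_of_pos hl _
            rw [hTγ]
            field_simp
            try ring
        _ = ENNReal.ofReal γ⁻¹ * ENNReal.ofReal (m ^ p) := by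
            rw [ENNReal.ofReal_mul (by positivity)]
        _ = ENNReal.ofReal γ⁻¹ * (M x) ^ p := by
            rw [← ENNReal.ofReal_rpow_of_nonneg hm0 hp0.le, hm, ENNReal.ofReal_toReal hMx]
  calc ENNReal.ofReal (l ^ p) * (volume.prod (wGamma γ)) E
      = ∫⁻ x, ENNReal.ofReal (l ^ p) *
          wGamma γ {t : ℝ | 0 < t ∧ l * t ^ (γ / p + 1) < |f (x + t) - f x|} := by
        rw [hprod, lintegral_const_mul' _ _ ENNReal.ofReal_ne_top]
    _ ≤ ∫⁻ x, ENNReal.ofReal γ⁻¹ * (M x) ^ p := lintegral_mono hpoint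
    _ = ENNReal.ofReal γ⁻¹ * ∫⁻ x, (M x) ^ p :=
        lintegral_const_mul' _ _ ENNReal.ofReal_ne_top
    _ ≤ ENNReal.ofReal γ⁻¹ * (ENNReal.ofReal (Cp ^ p) *
          ∫⁻ x, ENNReal.ofReal (|deriv f x| ^ p)) := by
        gcongr
        exact hmaximal (deriv f) hderivmeas
    _ = ENNReal.ofReal (Cp ^ p / γ) * ∫⁻ x, ENNReal.ofReal (|deriv f x| ^ p) := by
        have h : γ⁻¹ * Cp ^ p = Cp ^ p / γ := by rw [div_eq_mul_inv]; ring
        rw [← mul_assoc, ← ENNReal.ofReal_mul (by positivity), h]
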